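/- Let Γ be the subgroup of SO(12) generated by the diagonal matrices γ₁ = diag(−I₂, −I₂, I₂, I₂, I₂, I₂), γ₂ = diag(I₂, I₂, −I₂, −I₂, I₂, I₂), γ₃ = diag(I₂, I₂, I₂, I₂, −I₂, −I₂), and let Γ' be the subgroup of SO(12) generated by γ'₁ = diag(−I₂, −I₂, I₂, I₂, I₂, I₂), γ'₂ = diag(−I₂, I₂, −I₂, I₂, I₂, I₂), γ'₃ = diag(−I₂, −I₂, −I₂, −I₂, −I₂, −I₂), where I₂ is the 2×2 identity matrix. Then Γ and Γ' are almost conjugate in SO(12): there exists a bijection φ : Γ → Γ' such that for every g ∈ Γ, the matrices g and φ(g) are conjugate in SO(12). -/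

import Mathlib

open Matrix Equiv

namespace AC12

abbrev s1 : Fin 12 → ℝ := fun i => if (i : ℕ) < 4 then -1 else 1
abbrev s2 : Fin 12 → ℝ := fun i => if 4 ≤ (i : ℕ) ∧ (i : ℕ) < 8 then -1 else 1
abbrev s3 : Fin 12 → ℝ := fun i => if 8 ≤ (i : ℕ) then -1 else 1
abbrev t2 : Fin 12 → ℝ := fun i => if (i : ℕ) < 2 ∨ (4 ≤ (i : ℕ) ∧ (i : ℕ) < 6) then -1 else 1
abbrev t3 : Fin 12 → ℝ := fun _ => (-1 : ℝ)

abbrev V2 := ZMod 2 × ZMod 2 × ZMod 2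

def Dv (v : V2) : Fin 12 → ℝ := fun i => s1 i ^ v.1.val * s2 i ^ v.2.1.val * s3 i ^ v.2.2.val
def Dv' (v : V2) : Fin 12 → ℝ := fun i => s1 i ^ v.1.val * t2 i ^ v.2.1.val * t3 i ^ v.2.2.val

def Dzv (v : V2) : Fin 12 → ℤ := fun i =>
  (if (i : ℕ) < 4 then -1 else 1) ^ v.1.val *
    (if 4 ≤ (i : ℕ) ∧ (i : ℕ) < 8 then -1 else 1) ^ v.2.1.val *
    (if 8 ≤ (i : ℕ) then -1 else 1) ^ v.2.2.val

def Dzv' (v : V2) : Fin 12 → ℤ := fun i =>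
  (if (i : ℕ) < 4 then -1 else 1) ^ v.1.val *
    (if (i : ℕ) < 2 ∨ (4 ≤ (i : ℕ) ∧ (i : ℕ) < 6) then -1 else 1) ^ v.2.1.val *
    ((-1) : ℤ) ^ v.2.2.val

lemma Dv_cast (v : V2) (i : Fin 12) : Dv v i = ((Dzv v i : ℤ) : ℝ) := by
  simp only [Dv, Dzv]
  split_ifs <;> push_cast <;> ring

lemma Dv'_cast (v : V2) (i : Fin 12) : Dv' v i = ((Dzv' v i : ℤ) : ℝ) := by
  simp only [Dv', Dzv']
  split_ifs <;> push_cast <;> ring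

lemma pow_val_add {x : ℝ} (hx : x ^ 2 = 1) (a b : ZMod 2) :
    x ^ (a + b).val = x ^ a.val * x ^ b.val := by
  have key : ∀ a b : ZMod 2, (a+b).val = a.val + b.val ∨ ((a+b).val = 0 ∧ a.val = 1 ∧ b.val = 1) := by decide
  rcases key a b with h | ⟨h, ha, hb⟩
  · rw [h, pow_add]
  · rw [h, ha, hb, pow_zero, pow_one, ← sq, hx]

lemma sq1 {c : Prop} [Decidable c] : ((if c then (-1:ℝ) else 1)) ^ 2 = 1 := by
  split_ifs <;> norm_num

lemma Dv_add (u v : V2) : Dv (u + v) = fun i => Dv u i * Dv v i := by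
  funext i
  simp only [Dv, Prod.fst_add, Prod.snd_add]
  rw [pow_val_add sq1, pow_val_add sq1, pow_val_add sq1]
  ring

lemma Dv'_add (u v : V2) : Dv' (u + v) = fun i => Dv' u i * Dv' v i := by
  funext i
  simp only [Dv', Prod.fst_add, Prod.snd_add]
  rw [pow_val_add sq1, pow_val_add sq1, pow_val_add (by norm_num : ((-1:ℝ))^2 = 1)]
  ring

lemma conj_diag {n : Type*} [Fintype n] [DecidableEq n]
    (σ : Equiv.Perm n) (hσ : Equiv.Perm.sign σ = 1) (d d' : n → ℝ) (hd : ∀ i, d (σ i) = d' i) :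
    ∃ h : Matrix n n ℝ, h ∈ Matrix.specialOrthogonalGroup n ℝ ∧
      h * Matrix.diagonal d * h⁻¹ = Matrix.diagonal d' := by
  set P := σ.permMatrix ℝ with hP
  have hT : Pᵀ = σ.symm.toPEquiv.toMatrix := by
    rw [hP, Equiv.Perm.permMatrix, ← PEquiv.toMatrix_symm, Equiv.toPEquiv_symm]
  have hconj : ∀ M : Matrix n n ℝ, P * M * Pᵀ = M.submatrix σ σ := by
    intro M
    rw [hT, hP, Equiv.Perm.permMatrix, PEquiv.toMatrix_toPEquiv_mul,
      PEquiv.mul_toMatrix_toPEquiv, Equiv.symm_symm, Matrix.submatrix_submatrix]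
    simp
  have horth : P * Pᵀ = 1 := by
    have := hconj 1
    rwa [Matrix.mul_one, Matrix.submatrix_one_equiv] at this
  have hinv : P⁻¹ = Pᵀ := Matrix.inv_eq_right_inv horth
  refine ⟨P, ?_, ?_⟩
  · rw [Matrix.mem_specialOrthogonalGroup_iff]
    refine ⟨?_, ?_⟩
    · rw [Matrix.mem_orthogonalGroup_iff]
      have hstar : star P = Pᵀ := by
        ext i j
        simp [Matrix.star_apply]
      exact horth
    · rw [hP, Matrix.det_permutation, hσ]
      simp
  · rw [hinv, hconj, Matrix.submatrix_diagonal_equiv,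
      show d ∘ σ = d' from funext hd]

/-- membership of the `Dv` diagonals in the closure. -/
lemma mem_cl (v : V2) :
    Matrix.diagonal (Dv v) ∈
      Submonoid.closure {Matrix.diagonal s1, Matrix.diagonal s2, Matrix.diagonal s3} := by
  have h : Matrix.diagonal (Dv v) =
      (Matrix.diagonal s1) ^ v.1.val * (Matrix.diagonal s2) ^ v.2.1.val *
        (Matrix.diagonal s3) ^ v.2.2.val := by
    simp only [Matrix.diagonal_pow, Matrix.diagonal_mul_diagonal]
    congr 1
  rw [h]
  exact mul_mem (mul_mem (pow_mem (Submonoid.subset_closure (by simp)) _)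
    (pow_mem (Submonoid.subset_closure (by simp)) _))
    (pow_mem (Submonoid.subset_closure (by simp)) _)

lemma mem_cl' (v : V2) :
    Matrix.diagonal (Dv' v) ∈
      Submonoid.closure {Matrix.diagonal s1, Matrix.diagonal t2, Matrix.diagonal t3} := by
  have h : Matrix.diagonal (Dv' v) =
      (Matrix.diagonal s1) ^ v.1.val * (Matrix.diagonal t2) ^ v.2.1.val *
        (Matrix.diagonal t3) ^ v.2.2.val := by
    simp only [Matrix.diagonal_pow, Matrix.diagonal_mul_diagonal]
    congr 1
  rw [h]
  exact mul_mem (mul_mem (pow_mem (Submonoid.subset_closure (by simp)) _)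
    (pow_mem (Submonoid.subset_closure (by simp)) _))
    (pow_mem (Submonoid.subset_closure (by simp)) _)

lemma cl_sub :
    ∀ x ∈ Submonoid.closure {Matrix.diagonal s1, Matrix.diagonal s2, Matrix.diagonal s3},
      ∃ v : V2, x = Matrix.diagonal (Dv v) := by
  intro x hx
  induction hx using Submonoid.closure_induction with
  | mem y hy =>
      simp only [Set.mem_insert_iff, Set.mem_singleton_iff] at hy
      rcases hy with rfl | rfl | rfl
      · exact ⟨(1, 0, 0), (congrArg Matrix.diagonal (funext fun i => by simp [Dv, show ((1:ZMod 2)).val = 1 from rfl, show ((0:ZMod 2)).val = 0 from rfl])).symm⟩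
      · exact ⟨(0, 1, 0), (congrArg Matrix.diagonal (funext fun i => by simp [Dv, show ((1:ZMod 2)).val = 1 from rfl, show ((0:ZMod 2)).val = 0 from rfl])).symm⟩
      · exact ⟨(0, 0, 1), (congrArg Matrix.diagonal (funext fun i => by simp [Dv, show ((1:ZMod 2)).val = 1 from rfl, show ((0:ZMod 2)).val = 0 from rfl])).symm⟩
  | one =>
      have h0 : Dv (0 : V2) = fun _ => (1:ℝ) :=
        funext fun i => by simp [Dv, show ((0:ZMod 2)).val = 0 from rfl]
      exact ⟨0, by simp [h0]⟩
  | mul y z _ _ ihy ihz =>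
      obtain ⟨u, rfl⟩ := ihy
      obtain ⟨v, rfl⟩ := ihz
      exact ⟨u + v, by rw [Matrix.diagonal_mul_diagonal, Dv_add]⟩

lemma cl_sub' :
    ∀ x ∈ Submonoid.closure {Matrix.diagonal s1, Matrix.diagonal t2, Matrix.diagonal t3},
      ∃ v : V2, x = Matrix.diagonal (Dv' v) := by
  intro x hx
  induction hx using Submonoid.closure_induction with
  | mem y hy =>
      simp only [Set.mem_insert_iff, Set.mem_singleton_iff] at hy
      rcases hy with rfl | rfl | rfl
      · exact ⟨(1, 0, 0), (congrArg Matrix.diagonal (funext fun i => by simp [Dv', show ((1:ZMod 2)).val = 1 from rfl, show ((0:ZMod 2)).val = 0 from rfl])).symm⟩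
      · exact ⟨(0, 1, 0), (congrArg Matrix.diagonal (funext fun i => by simp [Dv', t2, show ((1:ZMod 2)).val = 1 from rfl, show ((0:ZMod 2)).val = 0 from rfl])).symm⟩
      · exact ⟨(0, 0, 1), (congrArg Matrix.diagonal (funext fun i => by simp [Dv', show ((1:ZMod 2)).val = 1 from rfl, show ((0:ZMod 2)).val = 0 from rfl])).symm⟩
  | one =>
      have h0 : Dv' (0 : V2) = fun _ => (1:ℝ) :=
        funext fun i => by simp [Dv', show ((0:ZMod 2)).val = 0 from rfl]
      exact ⟨0, by simp [h0]⟩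
  | mul y z _ _ ihy ihz =>
      obtain ⟨u, rfl⟩ := ihy
      obtain ⟨v, rfl⟩ := ihz
      exact ⟨u + v, by rw [Matrix.diagonal_mul_diagonal, Dv'_add]⟩

lemma neg_one_pow_inj {a b : ZMod 2} (h : ((-1:ℝ)) ^ a.val = (-1) ^ b.val) : a = b := by
  have ha := ZMod.val_lt a
  have hb := ZMod.val_lt b
  apply ZMod.val_injective
  interval_cases h1 : a.val <;> interval_cases h2 : b.val
  all_goals (norm_num at h <;> rfl)

lemma Dv_inj : Function.Injective Dv := by
  rintro ⟨a, b, c⟩ ⟨a', b', c'⟩ h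
  have h0 := congrFun h ⟨0, by norm_num⟩
  have h4 := congrFun h ⟨4, by norm_num⟩
  have h8 := congrFun h ⟨8, by norm_num⟩
  simp only [Dv] at h0 h4 h8
  norm_num at h0 h4 h8
  exact Prod.ext (neg_one_pow_inj h0) (Prod.ext (neg_one_pow_inj h4) (neg_one_pow_inj h8))

lemma Dv'_inj : Function.Injective Dv' := by
  rintro ⟨a, b, c⟩ ⟨a', b', c'⟩ h
  have h2 := congrFun h ⟨2, by norm_num⟩
  have h4 := congrFun h ⟨4, by norm_num⟩
  have h8 := congrFun h ⟨8, by norm_num⟩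
  simp only [Dv'] at h2 h4 h8
  norm_num at h2 h4 h8
  have hc : c = c' := neg_one_pow_inj h8
  subst hc
  have hne : ((-1:ℝ)) ^ c.val ≠ 0 := by positivity
  have ha : a = a' := neg_one_pow_inj (mul_right_cancel₀ hne h2)
  have hb : b = b' := neg_one_pow_inj (mul_right_cancel₀ hne h4)
  exact Prod.ext ha (Prod.ext hb rfl)

noncomputable def eG : V2 ≃
    (Submonoid.closure {Matrix.diagonal s1, Matrix.diagonal s2, Matrix.diagonal s3} :
      Submonoid (Matrix (Fin 12) (Fin 12) ℝ)) :=
  Equiv.ofBijective (fun v => ⟨Matrix.diagonal (Dv v), mem_cl v⟩)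
    ⟨fun u v h => Dv_inj (Matrix.diagonal_injective (congrArg Subtype.val h)),
     fun x => by
      obtain ⟨v, hv⟩ := cl_sub x.1 x.2
      exact ⟨v, Subtype.ext hv.symm⟩⟩

noncomputable def eG' : V2 ≃
    (Submonoid.closure {Matrix.diagonal s1, Matrix.diagonal t2, Matrix.diagonal t3} :
      Submonoid (Matrix (Fin 12) (Fin 12) ℝ)) :=
  Equiv.ofBijective (fun v => ⟨Matrix.diagonal (Dv' v), mem_cl' v⟩)
    ⟨fun u v h => Dv'_inj (Matrix.diagonal_injective (congrArg Subtype.val h)),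
     fun x => by
      obtain ⟨v, hv⟩ := cl_sub' x.1 x.2
      exact ⟨v, Subtype.ext hv.symm⟩⟩

def mfun : V2 → V2 := fun v =>
  (v.1 + v.2.2 + v.1 * v.2.1 + v.1 * v.2.2, v.2.1 + v.2.2,
    v.1 * v.2.1 + v.1 * v.2.2 + v.2.1 * v.2.2)

noncomputable def mEquiv : V2 ≃ V2 := Equiv.ofBijective mfun (by decide)

lemma hd_of_int (σ : Equiv.Perm (Fin 12)) (u w : V2) (h : ∀ i, Dzv u (σ i) = Dzv' w i) :
    ∀ i, Dv u (σ i) = Dv' w i := by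
  intro i
  rw [Dv_cast, Dv'_cast, h i]

end AC12

open AC12 in
/-- **Almost conjugate non-cyclic subgroups of `SO(12)`.**
Let `Γ = ⟨γ₁, γ₂, γ₃⟩` and `Γ' = ⟨γ'₁, γ'₂, γ'₃⟩` be the elementary abelian subgroups of
`SO(12)` generated by the indicated block-diagonal matrices with `±I₂` blocks (since every
element is an involution, the generated subgroups agree with the generated submonoids).
Then `Γ` and `Γ'` are almost conjugate in `SO(12)`: there is a bijection `φ : Γ → Γ'` such
that `g` and `φ(g)` are conjugate by an element of `SO(12)` for every `g ∈ Γ`. -/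
theorem almost_conjugate_SO12
    (γ₁ γ₂ γ₃ γ₁' γ₂' γ₃' : Matrix (Fin 12) (Fin 12) ℝ)
    (h1 : γ₁ = Matrix.diagonal fun i : Fin 12 => if (i : ℕ) < 4 then -1 else 1)
    (h2 : γ₂ = Matrix.diagonal fun i : Fin 12 => if 4 ≤ (i : ℕ) ∧ (i : ℕ) < 8 then -1 else 1)
    (h3 : γ₃ = Matrix.diagonal fun i : Fin 12 => if 8 ≤ (i : ℕ) then -1 else 1)
    (h1' : γ₁' = Matrix.diagonal fun i : Fin 12 => if (i : ℕ) < 4 then -1 else 1)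
    (h2' : γ₂' = Matrix.diagonal fun i : Fin 12 =>
        if (i : ℕ) < 2 ∨ (4 ≤ (i : ℕ) ∧ (i : ℕ) < 6) then -1 else 1)
    (h3' : γ₃' = Matrix.diagonal fun i : Fin 12 => (-1 : ℝ)) :
    ∃ φ : (Submonoid.closure {γ₁, γ₂, γ₃} : Submonoid (Matrix (Fin 12) (Fin 12) ℝ)) ≃
        (Submonoid.closure {γ₁', γ₂', γ₃'} : Submonoid (Matrix (Fin 12) (Fin 12) ℝ)),
      ∀ x : (Submonoid.closure {γ₁, γ₂, γ₃} : Submonoid (Matrix (Fin 12) (Fin 12) ℝ)),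
        ∃ h : Matrix (Fin 12) (Fin 12) ℝ,
          h ∈ Matrix.specialOrthogonalGroup (Fin 12) ℝ ∧
            h * (x : Matrix (Fin 12) (Fin 12) ℝ) * h⁻¹ = (φ x : Matrix (Fin 12) (Fin 12) ℝ) := by
  subst h1 h2 h3 h1' h2' h3'
  refine ⟨eG.symm.trans (mEquiv.trans eG'), ?_⟩
  intro x
  obtain ⟨v, rfl⟩ := eG.surjective x
  simp only [Equiv.trans_apply, Equiv.symm_apply_apply]
  show ∃ h : Matrix (Fin 12) (Fin 12) ℝ,
      h ∈ Matrix.specialOrthogonalGroup (Fin 12) ℝ ∧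
        h * Matrix.diagonal (Dv v) * h⁻¹ = Matrix.diagonal (Dv' (mfun v))
  obtain ⟨a, b, c⟩ := v
  fin_cases a <;> fin_cases b <;> fin_cases c
  · exact conj_diag 1 (by simp) _ _ (hd_of_int _ _ _ (by decide))
  · exact conj_diag (Equiv.swap 2 8 * Equiv.swap 3 9 * Equiv.swap 4 10 * Equiv.swap 5 11)
      (by simp [Equiv.Perm.sign_swap (by decide : (2:Fin 12) ≠ 8),
        Equiv.Perm.sign_swap (by decide : (3:Fin 12) ≠ 9),
        Equiv.Perm.sign_swap (by decide : (4:Fin 12) ≠ 10),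
        Equiv.Perm.sign_swap (by decide : (5:Fin 12) ≠ 11)]) _ _
      (hd_of_int _ _ _ (by decide))
  · exact conj_diag (Equiv.swap 0 6 * Equiv.swap 1 7)
      (by simp [Equiv.Perm.sign_swap (by decide : (0:Fin 12) ≠ 6),
        Equiv.Perm.sign_swap (by decide : (1:Fin 12) ≠ 7)]) _ _
      (hd_of_int _ _ _ (by decide))
  · exact conj_diag 1 (by simp) _ _ (hd_of_int _ _ _ (by decide))
  · exact conj_diag 1 (by simp) _ _ (hd_of_int _ _ _ (by decide))
  · exact conj_diag (Equiv.swap 2 6 * Equiv.swap 3 7)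
      (by simp [Equiv.Perm.sign_swap (by decide : (2:Fin 12) ≠ 6),
        Equiv.Perm.sign_swap (by decide : (3:Fin 12) ≠ 7)]) _ _
      (hd_of_int _ _ _ (by decide))
  · exact conj_diag (Equiv.swap 0 8 * Equiv.swap 1 9 * Equiv.swap 4 10 * Equiv.swap 5 11)
      (by simp [Equiv.Perm.sign_swap (by decide : (0:Fin 12) ≠ 8),
        Equiv.Perm.sign_swap (by decide : (1:Fin 12) ≠ 9),
        Equiv.Perm.sign_swap (by decide : (4:Fin 12) ≠ 10),
        Equiv.Perm.sign_swap (by decide : (5:Fin 12) ≠ 11)]) _ _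
      (hd_of_int _ _ _ (by decide))
  · exact conj_diag 1 (by simp) _ _ (hd_of_int _ _ _ (by decide))
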